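/- Let p be an odd prime, m a positive integer, and let s be an integer with 0 ≤ s ≤ m such that m+s is even and m+s ≥ 4. Let f : F_q → F_p be a weakly regular s-plateaued function with f(0) = 0 and sign ε, which is balanced (W_f(0) = 0), and set ε̄ = ε·((−1)^{(p−1)/2})^{(m+s)/2}. Then the extended code C̄_f' has length p^m + m + 2 and dimension m + 2, and its minimum distance is at least p^m − p^{m−1} − (p−1)·p^{(m+s)/2−1} + 2 if ε̄ = 1, and at least p^m − p^{m−1} − p^{(m+s)/2−1} + 2 if ε̄ = −1. -/

import Mathlib

open Finset

noncomputable section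

/-- ζ_p = exp(2πi/p). -/
def zetaP (p : ℕ) : ℂ := Complex.exp (2 * Real.pi * Complex.I / p)

/-- ζ_p^a for a ∈ F_p. -/
def eChar (p : ℕ) (a : ZMod p) : ℂ := zetaP p ^ a.val

/-- Walsh transform of f : F_q → F_p : W_f(β) = Σ_x ζ_p^{f(x) − Tr(βx)}. -/
def walsh (p : ℕ) (F : Type) [Field F] [Fintype F] [Algebra (ZMod p) F]
    (f : F → ZMod p) (β : F) : ℂ :=
  ∑ x : F, eChar p (f x - Algebra.trace (ZMod p) F (β * x))

/-- √p* = √p if p ≡ 1 (mod 4), and i√p if p ≡ 3 (mod 4). -/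
def sqrtPStar (p : ℕ) : ℂ :=
  if p % 4 = 1 then ((Real.sqrt p : ℝ) : ℂ) else Complex.I * ((Real.sqrt p : ℝ) : ℂ)

/-- f is s-plateaued: |W_f(β)|² ∈ {0, p^{m+s}} for all β. -/
def IsPlateaued (p m s : ℕ) (F : Type) [Field F] [Fintype F] [Algebra (ZMod p) F]
    (f : F → ZMod p) : Prop :=
  ∀ β : F, Complex.normSq (walsh p F f β) = 0 ∨
    Complex.normSq (walsh p F f β) = (p : ℝ) ^ (m + s)

/-- Walsh support S_f = {β : |W_f(β)|² = p^{m+s}}. -/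
def walshSupp (p m s : ℕ) (F : Type) [Field F] [Fintype F] [Algebra (ZMod p) F]
    (f : F → ZMod p) : Set F :=
  {β : F | Complex.normSq (walsh p F f β) = (p : ℝ) ^ (m + s)}

/-- f is weakly regular s-plateaued with sign ε and dual function f^*. -/
def IsWeaklyRegularPlateaued (p m s : ℕ) (F : Type) [Field F] [Fintype F]
    [Algebra (ZMod p) F] (f : F → ZMod p) (ε : ℤ) (fstar : F → ZMod p) : Prop :=
  IsPlateaued p m s F f ∧ (ε = 1 ∨ ε = -1) ∧
  (∀ β : F, β ∉ walshSupp p m s F f → fstar β = 0) ∧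
  (∀ β ∈ walshSupp p m s F f,
    walsh p F f β = (ε : ℂ) * sqrtPStar p ^ (m + s) * eChar p (fstar β))

/-- Walsh transform of a Boolean function, with values in ℤ. -/
def walsh2 (F : Type) [Field F] [Fintype F] [Algebra (ZMod 2) F]
    (f : F → ZMod 2) (β : F) : ℤ :=
  ∑ x : F, (-1 : ℤ) ^ ((f x + Algebra.trace (ZMod 2) F (β * x)).val)

/-- A Boolean function is s-plateaued: W_f(β)² ∈ {0, 2^{m+s}} for all β. -/
def IsPlateaued2 (m s : ℕ) (F : Type) [Field F] [Fintype F] [Algebra (ZMod 2) F]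
    (f : F → ZMod 2) : Prop :=
  ∀ β : F, walsh2 F f β ^ 2 = 0 ∨ walsh2 F f β ^ 2 = 2 ^ (m + s)

/-- Hamming weight. -/
def wtH {n : Type} [Fintype n] {K : Type} [Zero K] [DecidableEq K] (v : n → K) : ℕ :=
  (Finset.univ.filter (fun i => v i ≠ 0)).card

/-- A code S has minimum distance d. -/
def hasMinDist {n : Type} [Fintype n] {K : Type} [Zero K] [DecidableEq K]
    (S : Set (n → K)) (d : ℕ) : Prop :=
  (∃ v ∈ S, v ≠ 0 ∧ wtH v = d) ∧ ∀ v ∈ S, v ≠ 0 → d ≤ wtH v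

/-- The dual code of a set of vectors. -/
def dualCode {n : Type} [Fintype n] {K : Type} [Field K] (S : Set (n → K)) :
    Submodule K (n → K) where
  carrier := {u : n → K | ∀ v ∈ S, ∑ i, u i * v i = 0}
  add_mem' := by
    intro u w hu hw v hv
    have h1 := hu v hv
    have h2 := hw v hv
    simp only [Pi.add_apply, add_mul, Finset.sum_add_distrib, h1, h2, add_zero]
  zero_mem' := by
    intro v hv
    simp
  smul_mem' := by
    intro c u hu v hv
    have h1 := hu v hv
    simp only [Pi.smul_apply, smul_eq_mul, mul_assoc, ← Finset.mul_sum, h1, mul_zero]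

/-- The code C̄_f = {(a f(x) + Tr(bx) + c)_{x ∈ F_q}}. -/
def codeCbar (p : ℕ) (F : Type) [Field F] [Fintype F] [Algebra (ZMod p) F]
    (f : F → ZMod p) : Set (F → ZMod p) :=
  {v : F → ZMod p | ∃ a c : ZMod p, ∃ b : F,
    v = fun x => a * f x + Algebra.trace (ZMod p) F (b * x) + c}

/-- The extended code C̄_f' ⊆ F_p^{m+2+q}: all vectors
(c, a, a_0, …, a_{m−1}, (a f(x) + Tr(bx) + a + c)_{x ∈ F_q}) with b = Σ a_i α^i. -/
def extCode (p m : ℕ) (F : Type) [Field F] [Fintype F] [Algebra (ZMod p) F]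
    (f : F → ZMod p) (α : F) : Set (Fin (m + 2) ⊕ F → ZMod p) :=
  {v | ∃ c a : ZMod p, ∃ aa : Fin m → ZMod p,
    v = Sum.elim (Fin.cons c (Fin.cons a aa))
      (fun x => a * f x +
        Algebra.trace (ZMod p) F ((∑ i : Fin m, aa i • α ^ (i : ℕ)) * x) + a + c)}

/-- The punctured code C_f^* indexed by the nonzero elements of F_q. -/
def codeCstar (p : ℕ) (F : Type) [Field F] [Fintype F] [Algebra (ZMod p) F]
    (f : F → ZMod p) : Set ({x : F // x ≠ 0} → ZMod p) :=
  {v | ∃ a : ZMod p, ∃ b : F,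
    v = fun x => a * f x.val + Algebra.trace (ZMod p) F (b * x.val)}

end

section Aux1
variable {p : ℕ} [Fact p.Prime]

lemma pPrime : Nat.Prime p := Fact.out

lemma zetaP_prim (p : ℕ) [Fact p.Prime] : IsPrimitiveRoot (zetaP p) p :=
  Complex.isPrimitiveRoot_exp p (Nat.Prime.ne_zero Fact.out)

lemma zetaP_pow_mod (p : ℕ) [Fact p.Prime] (n : ℕ) : zetaP p ^ (n % p) = zetaP p ^ n := by
  conv_rhs => rw [← Nat.mod_add_div n p]
  rw [pow_add, pow_mul, (zetaP_prim p).pow_eq_one, one_pow, mul_one]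

/-- eChar as an additive character. -/
noncomputable def echarA (p : ℕ) [Fact p.Prime] : AddChar (ZMod p) ℂ where
  toFun := eChar p
  map_zero_eq_one' := by simp [eChar]
  map_add_eq_mul' := fun a b => by
    haveI : NeZero p := ⟨(pPrime (p := p)).ne_zero⟩
    simp only [eChar]
    rw [ZMod.val_add, zetaP_pow_mod, pow_add]

lemma eChar_add (a b : ZMod p) : eChar p (a + b) = eChar p a * eChar p b :=
  (echarA p).map_add_eq_mul a b

lemma eChar_zero : eChar p (0 : ZMod p) = 1 := by simp [eChar]

lemma eChar_one_ne_one : eChar p (1 : ZMod p) ≠ 1 := by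
  have h1 : (1 : ℕ) < p := (pPrime (p := p)).one_lt
  have : (1 : ZMod p).val = 1 := ZMod.val_one p
  simp only [eChar, this, pow_one]
  exact (zetaP_prim p).ne_one h1

lemma echarA_ne_zero : echarA p ≠ 0 := by
  rw [AddChar.ne_zero_iff]
  exact ⟨1, eChar_one_ne_one⟩

lemma sum_eChar : ∑ y : ZMod p, eChar p y = 0 := by
  have := AddChar.sum_eq_zero_iff_ne_zero.mpr (echarA_ne_zero (p := p))
  exact this

lemma sum_eChar_mul (t : ZMod p) :
    ∑ y : ZMod p, eChar p (y * t) = if t = 0 then (p : ℂ) else 0 := by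
  split_ifs with ht
  · simp [ht, eChar_zero, ZMod.card]
  · rw [← sum_eChar (p := p)]
    exact Fintype.sum_equiv (Equiv.mulRight₀ t ht) _ _ (fun y => rfl)

end Aux1

section Aux2
variable {p : ℕ} [Fact p.Prime] {F : Type} [Field F] [Fintype F] [Algebra (ZMod p) F]

instance : Module.Finite (ZMod p) F := Module.Finite.of_finite

example : Algebra.IsSeparable (ZMod p) F := inferInstance

lemma sum_eChar_trace (γ : F) (hγ : γ ≠ 0) :
    ∑ x : F, eChar p (Algebra.trace (ZMod p) F (γ * x)) = 0 := by
  classical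
  let L : F →ₗ[ZMod p] ZMod p := (Algebra.trace (ZMod p) F) ∘ₗ (LinearMap.mulLeft (ZMod p) γ)
  let ψ : AddChar F ℂ := (echarA p).compAddMonoidHom L.toAddMonoidHom
  have hψ : ψ ≠ 0 := by
    rw [AddChar.ne_zero_iff]
    obtain ⟨z, hz⟩ := Algebra.trace_surjective (ZMod p) F (1 : ZMod p)
    refine ⟨γ⁻¹ * z, ?_⟩
    have : L (γ⁻¹ * z) = 1 := by
      simp only [L, LinearMap.comp_apply, LinearMap.mulLeft_apply, ← mul_assoc,
        mul_inv_cancel₀ hγ, one_mul, hz]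
    show eChar p (L (γ⁻¹ * z)) ≠ 1
    rw [this]
    exact eChar_one_ne_one
  have := AddChar.sum_eq_zero_iff_ne_zero.mpr hψ
  exact this

end Aux2

section Aux3
variable {p : ℕ} [Fact p.Prime] {F : Type} [Field F] [Fintype F] [Algebra (ZMod p) F]

open Finset in
lemma card_zeros_mul (g : F → ZMod p) :
    ((Finset.univ.filter fun x => g x = 0).card : ℂ) * p =
      ∑ y : ZMod p, ∑ x : F, eChar p (y * g x) := by
  classical
  rw [Finset.sum_comm]
  have : ∀ x : F, ∑ y : ZMod p, eChar p (y * g x) = if g x = 0 then (p : ℂ) else 0 :=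
    fun x => sum_eChar_mul _
  simp_rw [this]
  rw [← Finset.sum_filter, Finset.sum_const, nsmul_eq_mul]

open Finset in
lemma card_affine (b : F) (hb : b ≠ 0) (c : ZMod p) :
    ((Finset.univ.filter fun x : F => Algebra.trace (ZMod p) F (b * x) + c = 0).card) * p =
      Fintype.card F := by
  classical
  have key : ((Finset.univ.filter fun x : F => Algebra.trace (ZMod p) F (b * x) + c = 0).card : ℂ) * p
      = Fintype.card F := by
    rw [card_zeros_mul]
    have hsplit : ∀ y : ZMod p, ∀ x : F,
        y * (Algebra.trace (ZMod p) F (b * x) + c) =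
          Algebra.trace (ZMod p) F ((y • b) * x) + y * c := by
      intro y x
      rw [smul_mul_assoc, map_smul, smul_eq_mul, mul_add]
    simp_rw [hsplit, eChar_add]
    rw [Finset.sum_eq_single 0]
    · simp [eChar_zero, Finset.card_univ]
    · intro y _ hy
      rw [← Finset.sum_mul, sum_eChar_trace (y • b) (smul_ne_zero hy hb), zero_mul]
    · simp
  have := key
  rw [← Nat.cast_mul] at this
  exact_mod_cast this

end Aux3

section Aux4
open Polynomial Finset
variable {p : ℕ} [Fact p.Prime]

lemma sum_zmod_eq_sum_range {M : Type*} [AddCommMonoid M] (g : ZMod p → M) :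
    ∑ j : ZMod p, g j = ∑ i ∈ Finset.range p, g (i : ZMod p) := by
  haveI : NeZero p := ⟨(pPrime (p := p)).ne_zero⟩
  refine Finset.sum_nbij' (fun j => j.val) (fun i => (i : ZMod p)) ?_ ?_ ?_ ?_ ?_
  · intro j _; exact Finset.mem_range.mpr (ZMod.val_lt j)
  · intro i _; exact Finset.mem_univ _
  · intro j _; exact ZMod.natCast_rightInverse j
  · intro i hi; exact ZMod.val_cast_of_lt (Finset.mem_range.mp hi)
  · intro j _; rw [ZMod.natCast_rightInverse j]

/-- Key lemma: if an integer combination of p-th roots of unity vanishes,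
the coefficients are all equal. -/
lemma coeffs_const (d : ZMod p → ℤ)
    (h : ∑ j : ZMod p, (d j : ℂ) * eChar p j = 0) : ∀ j, d j = d 0 := by
  classical
  haveI : NeZero p := ⟨(pPrime (p := p)).ne_zero⟩
  have hp_pos : 0 < p := (pPrime (p := p)).pos
  set ζ := zetaP p with hζ
  set D : ℚ[X] := ∑ i ∈ Finset.range p, Polynomial.C ((d (i : ZMod p) : ℚ)) * X ^ i with hD
  have hcoeff : ∀ n : ℕ, D.coeff n = if n ∈ Finset.range p then (d (n : ZMod p) : ℚ) else 0 := by
    intro n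
    rw [hD, Polynomial.finset_sum_coeff]
    simp_rw [Polynomial.coeff_C_mul, Polynomial.coeff_X_pow, mul_ite, mul_one, mul_zero]
    exact Finset.sum_ite_eq (Finset.range p) n _
  have hcoeff' : ∀ j : ZMod p, D.coeff j.val = (d j : ℚ) := by
    intro j
    rw [hcoeff, if_pos (Finset.mem_range.mpr (ZMod.val_lt j))]
    exact congrArg (fun t => ((d t : ℚ))) (ZMod.natCast_rightInverse j)
  have hhigh : ∀ n : ℕ, p ≤ n → D.coeff n = 0 := by
    intro n hn
    rw [hcoeff, if_neg]
    simp only [Finset.mem_range, not_lt]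
    exact hn
  have haev : Polynomial.aeval ζ D = 0 := by
    rw [hD, map_sum]
    simp_rw [map_mul, Polynomial.aeval_C, map_pow, Polynomial.aeval_X]
    rw [← h, sum_zmod_eq_sum_range (fun j => (d j : ℂ) * eChar p j)]
    refine Finset.sum_congr rfl fun i hi => ?_
    have hv : ((i : ZMod p)).val = i := ZMod.val_cast_of_lt (Finset.mem_range.mp hi)
    simp only [eChar, hv, Complex.coe_algebraMap]
    norm_cast
  have hdvd : minpoly ℚ ζ ∣ D := minpoly.dvd ℚ ζ haev
  have hmin : minpoly ℚ ζ = Polynomial.cyclotomic p ℚ :=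
    (Polynomial.cyclotomic_eq_minpoly_rat (zetaP_prim p) hp_pos).symm
  rw [hmin] at hdvd
  obtain ⟨q, hq⟩ := hdvd
  have hΦdeg : (Polynomial.cyclotomic p ℚ).natDegree = p - 1 := by
    rw [Polynomial.natDegree_cyclotomic, Nat.totient_prime (pPrime (p := p))]
  have hΦne : (Polynomial.cyclotomic p ℚ) ≠ 0 := Polynomial.cyclotomic_ne_zero p ℚ
  have key : ∀ j : ZMod p, (d j : ℚ) = q.coeff 0 := by
    by_cases hq0 : q = 0
    · intro j
      have hD0 : D = 0 := by rw [hq, hq0, mul_zero]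
      have h1 := hcoeff' j
      rw [hD0, Polynomial.coeff_zero] at h1
      rw [← h1, hq0, Polynomial.coeff_zero]
    · have hDdeg : D.natDegree ≤ p - 1 := by
        refine Polynomial.natDegree_le_iff_coeff_eq_zero.mpr fun n hn => hhigh n (by omega)
      have hDne : D ≠ 0 := by rw [hq]; exact mul_ne_zero hΦne hq0
      have hdeg : D.natDegree = (p - 1) + q.natDegree := by
        rw [hq, Polynomial.natDegree_mul hΦne hq0, hΦdeg]
      have hqdeg : q.natDegree = 0 := by omega
      have hqC : q = Polynomial.C (q.coeff 0) := Polynomial.eq_C_of_natDegree_eq_zero hqdeg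
      intro j
      have h2 : D.coeff j.val = (Polynomial.cyclotomic p ℚ).coeff j.val * q.coeff 0 := by
        conv_lhs => rw [hq, hqC]
        rw [Polynomial.coeff_mul_C]
      have h3 : (Polynomial.cyclotomic p ℚ).coeff j.val = 1 := by
        rw [Polynomial.cyclotomic_prime, Polynomial.finset_sum_coeff]
        simp_rw [Polynomial.coeff_X_pow]
        rw [Finset.sum_ite_eq (Finset.range p) j.val (fun _ => (1:ℚ))]
        rw [if_pos (Finset.mem_range.mpr (ZMod.val_lt j))]
      rw [← hcoeff' j, h2, h3, one_mul]
  intro j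
  have := (key j).trans (key 0).symm
  exact_mod_cast this

end Aux4

section Aux5
open Finset
variable {p : ℕ} [Fact p.Prime] {F : Type} [Field F] [Fintype F] [Algebra (ZMod p) F]

lemma walsh_fiber (f : F → ZMod p) (γ : F) (u : ZMod p) :
    ∑ x : F, eChar p (u * (f x - Algebra.trace (ZMod p) F (γ * x))) =
      ∑ j : ZMod p, ((Finset.univ.filter fun x : F =>
        f x - Algebra.trace (ZMod p) F (γ * x) = j).card : ℂ) * eChar p (u * j) := by
  classical
  rw [← Finset.sum_fiberwise Finset.univ
    (fun x : F => f x - Algebra.trace (ZMod p) F (γ * x))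
    (fun x => eChar p (u * (f x - Algebra.trace (ZMod p) F (γ * x))))]
  refine Finset.sum_congr rfl fun j _ => ?_
  rw [Finset.sum_congr rfl (fun x hx => ?_), Finset.sum_const, nsmul_eq_mul]
  rw [(Finset.mem_filter.mp hx).2]

/-- The Galois-conjugate Walsh values: if W_f(γ) = E·ζ^t with E an integer, then
the "u-twisted" sum equals E·ζ^{ut}. -/
lemma T_lemma (f : F → ZMod p) (γ : F) (E : ℤ) (t : ZMod p)
    (hW : walsh p F f γ = (E : ℂ) * eChar p t) (u : ZMod p) (hu : u ≠ 0) :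
    ∑ x : F, eChar p (u * (f x - Algebra.trace (ZMod p) F (γ * x))) =
      (E : ℂ) * eChar p (u * t) := by
  classical
  set cvec : ZMod p → ℤ := fun j => ((Finset.univ.filter fun x : F =>
    f x - Algebra.trace (ZMod p) F (γ * x) = j).card : ℤ) with hcvec
  set d : ZMod p → ℤ := fun j => cvec j - E * (if j = t then 1 else 0) with hd
  have hW1 : ∑ j : ZMod p, (cvec j : ℂ) * eChar p j = (E : ℂ) * eChar p t := by
    rw [← hW, walsh]
    have h1 := walsh_fiber f γ 1
    simp only [one_mul] at h1
    rw [h1]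
    refine Finset.sum_congr rfl fun j _ => ?_
    simp only [hcvec]
    push_cast
    ring
  have hdsum : ∑ j : ZMod p, (d j : ℂ) * eChar p j = 0 := by
    have expand : ∀ j : ZMod p, ((d j : ℤ) : ℂ) * eChar p j
        = (cvec j : ℂ) * eChar p j - (E : ℂ) * (if j = t then eChar p j else 0) := by
      intro j
      simp only [hd]
      push_cast
      split_ifs <;> ring
    simp_rw [expand]
    rw [Finset.sum_sub_distrib, hW1, ← Finset.mul_sum,
      Finset.sum_ite_eq' Finset.univ t (fun j => eChar p j), if_pos (Finset.mem_univ t), sub_self]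
  have hconst := coeffs_const d hdsum
  have hcv : ∀ j : ZMod p, (cvec j : ℂ) = (d 0 : ℂ) + (E : ℂ) * (if j = t then 1 else 0) := by
    intro j
    have h2 : cvec j = d 0 + E * (if j = t then 1 else 0) := by
      rw [← hconst j]
      simp only [hd]
      ring
    rw [h2]
    push_cast
    split_ifs <;> simp
  rw [walsh_fiber f γ u]
  calc ∑ j : ZMod p, ((Finset.univ.filter fun x : F =>
        f x - Algebra.trace (ZMod p) F (γ * x) = j).card : ℂ) * eChar p (u * j)
      = ∑ j : ZMod p, ((d 0 : ℂ) * eChar p (u * j) +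
          (E : ℂ) * (if j = t then eChar p (u * j) else 0)) := by
        refine Finset.sum_congr rfl fun j _ => ?_
        have h3 : (((Finset.univ.filter fun x : F =>
            f x - Algebra.trace (ZMod p) F (γ * x) = j).card : ℕ) : ℂ) = (cvec j : ℂ) := by
          simp only [hcvec]; push_cast; ring
        rw [h3, hcv j]
        split_ifs <;> ring
    _ = (d 0 : ℂ) * (∑ j : ZMod p, eChar p (j * u)) + (E : ℂ) * eChar p (u * t) := by
        rw [Finset.sum_add_distrib, ← Finset.mul_sum, ← Finset.mul_sum,
          Finset.sum_ite_eq' Finset.univ t (fun j => eChar p (u * j)),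
          if_pos (Finset.mem_univ t)]
        congr 2
        exact Finset.sum_congr rfl fun j _ => by rw [mul_comm]
    _ = (E : ℂ) * eChar p (u * t) := by
        rw [sum_eChar_mul u, if_neg hu, mul_zero, zero_add]

end Aux5

section Aux6
open Finset
variable {p : ℕ} [Fact p.Prime] {F : Type} [Field F] [Fintype F] [Algebra (ZMod p) F]

/-- Master counting lemma for a ≠ 0. -/
lemma count_lemma (f : F → ZMod p) (γ : F) (E : ℤ) (t : ZMod p)
    (hW : walsh p F f γ = (E : ℂ) * eChar p t)
    (a : ZMod p) (ha : a ≠ 0) (b : F) (hb : a • γ = -b) (dd : ZMod p) :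
    ((Finset.univ.filter fun x : F =>
        a * f x + Algebra.trace (ZMod p) F (b * x) + dd = 0).card : ℤ) * p
      = (Fintype.card F : ℤ) + E * (if dd + a * t = 0 then (p : ℤ) - 1 else -1) := by
  classical
  have key : ∀ (y : ZMod p) (x : F), (y*a) * Algebra.trace (ZMod p) F (γ*x)
      = -(y * Algebra.trace (ZMod p) F (b*x)) := by
    intro y x
    have h1 : (y*a) • (γ * x) = -(y • (b * x)) := by
      rw [mul_smul y a (γ * x), ← smul_mul_assoc a γ x, hb]
      rw [neg_mul, smul_neg]
    have h2 := congrArg (Algebra.trace (ZMod p) F) h1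
    rw [map_smul, map_neg, map_smul] at h2
    simpa [smul_eq_mul] using h2
  have hsplit : ∀ (y : ZMod p) (x : F),
      y * (a * f x + Algebra.trace (ZMod p) F (b * x) + dd) =
        (y * a) * (f x - Algebra.trace (ZMod p) F (γ * x)) + y * dd := by
    intro y x
    linear_combination key y x
  have hC : (((Finset.univ.filter fun x : F =>
        a * f x + Algebra.trace (ZMod p) F (b * x) + dd = 0).card : ℕ) : ℂ) * p
      = (Fintype.card F : ℂ) + (E : ℂ) * ((if dd + a * t = 0 then (p : ℂ) else 0) - 1) := by
    rw [card_zeros_mul]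
    have hterm : ∀ y : ZMod p, ∑ x : F,
        eChar p (y * (a * f x + Algebra.trace (ZMod p) F (b * x) + dd))
        = eChar p (y * dd) * ∑ x : F,
            eChar p ((y * a) * (f x - Algebra.trace (ZMod p) F (γ * x))) := by
      intro y
      rw [Finset.mul_sum]
      refine Finset.sum_congr rfl fun x _ => ?_
      rw [hsplit y x, eChar_add, mul_comm]
    simp_rw [hterm]
    rw [Finset.sum_eq_sum_sdiff_singleton_add (Finset.mem_univ (0 : ZMod p))]
    have h0 : eChar p ((0 : ZMod p) * dd) * ∑ x : F,
        eChar p (((0 : ZMod p) * a) * (f x - Algebra.trace (ZMod p) F (γ * x)))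
        = (Fintype.card F : ℂ) := by
      simp [eChar_zero, Finset.card_univ]
    rw [h0]
    have h1 : ∀ y ∈ Finset.univ \ {(0 : ZMod p)},
        eChar p (y * dd) * ∑ x : F,
          eChar p ((y * a) * (f x - Algebra.trace (ZMod p) F (γ * x)))
        = (E : ℂ) * eChar p (y * (dd + a * t)) := by
      intro y hy
      have hy0 : y ≠ 0 := by simpa using (Finset.mem_sdiff.mp hy).2
      rw [T_lemma f γ E t hW (y * a) (mul_ne_zero hy0 ha)]
      rw [show y * (dd + a * t) = y * dd + (y * a) * t by ring, eChar_add]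
      ring
    rw [Finset.sum_congr rfl h1, ← Finset.mul_sum]
    have h2 : ∑ y ∈ Finset.univ \ {(0 : ZMod p)}, eChar p (y * (dd + a * t))
        = (if dd + a * t = 0 then (p : ℂ) else 0) - 1 := by
      have h3 := sum_eChar_mul (p := p) (dd + a * t)
      rw [Finset.sum_eq_sum_sdiff_singleton_add (Finset.mem_univ (0 : ZMod p))] at h3
      have h4 : eChar p ((0 : ZMod p) * (dd + a * t)) = 1 := by
        rw [zero_mul, eChar_zero]
      rw [h4] at h3
      exact eq_sub_of_add_eq h3
    rw [h2, add_comm]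
  have hcast : (((Fintype.card F : ℤ) + E * (if dd + a * t = 0 then (p : ℤ) - 1 else -1) : ℤ) : ℂ)
      = (Fintype.card F : ℂ) + (E : ℂ) * ((if dd + a * t = 0 then (p : ℂ) else 0) - 1) := by
    split_ifs <;> push_cast <;> ring
  exact_mod_cast hC.trans hcast.symm

end Aux6

section Aux7
open Finset
variable {p : ℕ} [Fact p.Prime]

lemma p_mod4 (hp2 : p ≠ 2) : p % 4 = 1 ∨ p % 4 = 3 := by
  have h1 : p % 2 = 1 := Nat.odd_iff.mp ((pPrime (p := p)).odd_of_ne_two hp2)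
  omega

lemma sqrtPStar_sq (hp2 : p ≠ 2) :
    sqrtPStar p ^ 2 = (((-1 : ℤ) ^ ((p - 1) / 2) * p : ℤ) : ℂ) := by
  have hp0 : (0:ℝ) ≤ (p : ℝ) := Nat.cast_nonneg p
  rcases p_mod4 hp2 with h | h
  · have he : Even ((p - 1) / 2) := by
      obtain ⟨k, hk⟩ : ∃ k, p = 4 * k + 1 := ⟨p / 4, by omega⟩
      exact ⟨(p-1)/4, by omega⟩
    rw [sqrtPStar, if_pos h, he.neg_one_pow, one_mul]
    rw [← Complex.ofReal_pow, Real.sq_sqrt hp0]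
    norm_num
  · have ho : Odd ((p - 1) / 2) := by
      have : p % 4 = 3 := h
      refine Nat.odd_iff.mpr ?_
      omega
    rw [sqrtPStar, if_neg (by omega), ho.neg_one_pow, mul_pow, Complex.I_sq,
      ← Complex.ofReal_pow, Real.sq_sqrt hp0]
    push_cast
    ring

lemma sqrtPStar_pow (hp2 : p ≠ 2) (h : ℕ) :
    sqrtPStar p ^ (2 * h) = ((((-1 : ℤ) ^ ((p - 1) / 2) * p : ℤ) ^ h : ℤ) : ℂ) := by
  rw [pow_mul, sqrtPStar_sq hp2]
  push_cast
  ring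

lemma wtH_sum_elim {n₁ n₂ : Type} [Fintype n₁] [Fintype n₂] {K : Type} [Zero K] [DecidableEq K]
    (u : n₁ → K) (w : n₂ → K) : wtH (Sum.elim u w) = wtH u + wtH w := by
  classical
  simp [wtH, Finset.card_filter, Fintype.sum_sum_type]
  congr 1 <;> refine Finset.sum_congr rfl fun x _ => ?_ <;> split_ifs <;> simp_all

lemma powers_injective {m : ℕ} {F : Type} [Field F] [Fintype F] [Algebra (ZMod p) F]
    (hcard : Fintype.card F = p ^ m) (α : F) (hα : ∀ x : F, x ≠ 0 → ∃ k : ℕ, x = α ^ k)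
    (aa : Fin m → ZMod p) (hb : ∑ i : Fin m, aa i • α ^ (i : ℕ) = 0) : aa = 0 := by
  classical
  haveI : Module.Finite (ZMod p) F := Module.Finite.of_finite
  by_contra haa
  -- finrank = m
  have hrank : Module.finrank (ZMod p) F = m := by
    have h1 : Fintype.card F = Fintype.card (ZMod p) ^ Module.finrank (ZMod p) F :=
      Module.card_eq_pow_finrank
    rw [hcard, ZMod.card] at h1
    exact (Nat.pow_right_injective (pPrime (p := p)).two_le h1.symm)
  -- the polynomial
  set P : Polynomial (ZMod p) := ∑ i : Fin m, Polynomial.C (aa i) * Polynomial.X ^ (i : ℕ) with hP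
  have hPne : P ≠ 0 := by
    intro h0
    apply haa
    funext i
    have := congrArg (fun q => Polynomial.coeff q (i : ℕ)) h0
    simp only [hP, Polynomial.finset_sum_coeff, Polynomial.coeff_C_mul,
      Polynomial.coeff_X_pow, Polynomial.coeff_zero] at this
    rw [Finset.sum_eq_single i] at this
    · simpa using this
    · intro j _ hji
      rw [if_neg, mul_zero]
      exact fun hc => hji (Fin.ext hc.symm)
    · simp
  have hPdeg : P.degree < m := by
    refine lt_of_le_of_lt (Polynomial.degree_sum_le _ _) ?_
    rw [Finset.sup_lt_iff (by exact_mod_cast WithBot.bot_lt_coe m)]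
    intro i _
    refine lt_of_le_of_lt (Polynomial.degree_mul_le _ _) ?_
    refine lt_of_le_of_lt (add_le_add Polynomial.degree_C_le le_rfl) ?_
    rw [Polynomial.degree_X_pow, zero_add]
    exact_mod_cast i.isLt
  have hProot : Polynomial.aeval α P = 0 := by
    rw [hP, map_sum]
    simp_rw [map_mul, Polynomial.aeval_C, map_pow, Polynomial.aeval_X]
    rw [← hb]
    exact Finset.sum_congr rfl fun i _ => by rw [Algebra.smul_def]
  have hint : IsIntegral (ZMod p) α := Algebra.IsIntegral.isIntegral α
  have hmindeg : (minpoly (ZMod p) α).degree < m :=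
    lt_of_le_of_lt (minpoly.degree_le_of_ne_zero (ZMod p) α hPne hProot) hPdeg
  -- adjoin α = ⊤
  have htop : IntermediateField.adjoin (ZMod p) {α} = ⊤ := by
    rw [eq_top_iff]
    intro x _
    by_cases hx : x = 0
    · rw [hx]; exact zero_mem _
    · obtain ⟨k, rfl⟩ := hα x hx
      exact pow_mem (IntermediateField.mem_adjoin_simple_self _ α) k
  have hfr : Module.finrank (ZMod p) (IntermediateField.adjoin (ZMod p) {α}) =
      (minpoly (ZMod p) α).natDegree := IntermediateField.adjoin.finrank hint
  have hfr2 : Module.finrank (ZMod p) (IntermediateField.adjoin (ZMod p) {α}) =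
      Module.finrank (ZMod p) F := by
    rw [htop]
    exact (IntermediateField.topEquiv (F := ZMod p) (E := F)).toLinearEquiv.finrank_eq
  have hminne : minpoly (ZMod p) α ≠ 0 := minpoly.ne_zero hint
  have hlt : (minpoly (ZMod p) α).natDegree < m := by
    have := Polynomial.degree_eq_natDegree hminne
    rw [this] at hmindeg
    exact_mod_cast hmindeg
  omega

end Aux7

section MainAux
open Finset
variable {p : ℕ} [Fact p.Prime] {F : Type} [Field F] [Fintype F] [Algebra (ZMod p) F]

/-- The zero prefix. -/
lemma cons_zero_zero {m : ℕ} :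
    (Fin.cons (0 : ZMod p) (Fin.cons (0 : ZMod p) (0 : Fin m → ZMod p)) : Fin (m + 2) → ZMod p)
      = 0 := by
  funext j
  refine Fin.cases rfl (fun k => ?_) j
  refine Fin.cases rfl (fun l => ?_) k
  simp [Fin.cons_succ]

lemma one_le_wtH {n : Type} [Fintype n] {K : Type} [Zero K] [DecidableEq K]
    (v : n → K) (i : n) (hi : v i ≠ 0) : 1 ≤ wtH v :=
  Finset.card_pos.mpr ⟨i, Finset.mem_filter.mpr ⟨Finset.mem_univ _, hi⟩⟩

lemma two_le_wtH {n : Type} [Fintype n] {K : Type} [Zero K] [DecidableEq K]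
    (v : n → K) (i j : n) (hij : i ≠ j) (hi : v i ≠ 0) (hj : v j ≠ 0) : 2 ≤ wtH v :=
  Finset.one_lt_card.mpr ⟨i, Finset.mem_filter.mpr ⟨Finset.mem_univ _, hi⟩,
    j, Finset.mem_filter.mpr ⟨Finset.mem_univ _, hj⟩, hij⟩

end MainAux

set_option maxHeartbeats 1000000 in
theorem statement7 (p m s : ℕ) [Fact p.Prime] (hp2 : p ≠ 2) (hm : 1 ≤ m) (hs : s ≤ m)
    (hpar : Even (m + s)) (hms : 4 ≤ m + s)
    (F : Type) [Field F] [Fintype F] [Algebra (ZMod p) F]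
    (hcard : Fintype.card F = p ^ m)
    (α : F) (hα : ∀ x : F, x ≠ 0 → ∃ k : ℕ, x = α ^ k)
    (f : F → ZMod p) (hf0 : f 0 = 0) (ε : ℤ) (fstar : F → ZMod p)
    (hwr : IsWeaklyRegularPlateaued p m s F f ε fstar)
    (hbal : walsh p F f 0 = 0)
    (εb : ℤ) (hεb : εb = ε * ((-1 : ℤ) ^ ((p - 1) / 2)) ^ ((m + s) / 2)) :
    Fintype.card (Fin (m + 2) ⊕ F) = p ^ m + m + 2 ∧
    Set.ncard (extCode p m F f α) = p ^ (m + 2) ∧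
    (εb = 1 → ∀ v ∈ extCode p m F f α, v ≠ 0 →
      p ^ m - p ^ (m - 1) - (p - 1) * p ^ ((m + s) / 2 - 1) + 2 ≤ wtH v) ∧
    (εb = -1 → ∀ v ∈ extCode p m F f α, v ≠ 0 →
      p ^ m - p ^ (m - 1) - p ^ ((m + s) / 2 - 1) + 2 ≤ wtH v) := by
  classical
  have hprime : Nat.Prime p := Fact.out
  have hp3 : 3 ≤ p := by
    have := hprime.two_le
    rcases Nat.lt_or_ge p 3 with h | h
    · interval_cases p <;> simp_all
    · exact h
  have hmod2 := Nat.even_iff.mp hpar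
  -- Part 1
  have part1 : Fintype.card (Fin (m + 2) ⊕ F) = p ^ m + m + 2 := by
    rw [Fintype.card_sum, Fintype.card_fin, hcard]
    omega
  -- Part 2
  have part2 : Set.ncard (extCode p m F f α) = p ^ (m + 2) := by
    set Φ : (ZMod p × ZMod p × (Fin m → ZMod p)) → (Fin (m + 2) ⊕ F → ZMod p) :=
      fun t => Sum.elim (Fin.cons t.1 (Fin.cons t.2.1 t.2.2))
        (fun x => t.2.1 * f x +
          Algebra.trace (ZMod p) F ((∑ i : Fin m, t.2.2 i • α ^ (i : ℕ)) * x) + t.2.1 + t.1)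
      with hΦ
    have hrange : extCode p m F f α = Set.range Φ := by
      ext v
      constructor
      · rintro ⟨c, a, aa, hv⟩; exact ⟨⟨c, a, aa⟩, hv.symm⟩
      · rintro ⟨⟨c, a, aa⟩, hv⟩; exact ⟨c, a, aa, hv.symm⟩
    have hinj : Function.Injective Φ := by
      rintro ⟨c, a, aa⟩ ⟨c', a', aa'⟩ heq
      have h0 := congrFun heq (Sum.inl 0)
      have h1 := congrFun heq (Sum.inl (Fin.succ 0))
      have h2 := fun i : Fin m => congrFun heq (Sum.inl (Fin.succ (Fin.succ i)))
      simp only [hΦ, Sum.elim_inl, Fin.cons_zero, Fin.cons_succ] at h0 h1 h2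
      exact Prod.ext h0 (Prod.ext h1 (funext h2))
    rw [hrange, ← Nat.card_coe_set_eq, Nat.card_range_of_injective hinj]
    rw [Nat.card_eq_fintype_card, Fintype.card_prod, Fintype.card_prod, Fintype.card_fun,
      ZMod.card, Fintype.card_fin]
    ring
  -- common setup for parts 3, 4
  obtain ⟨hplat, hsign, hfz, hwval⟩ := hwr
  have h2h : m + s = 2 * ((m + s) / 2) := by omega
  have hWs : ∀ γ ∈ walshSupp p m s F f,
      walsh p F f γ = ((εb * (p : ℤ) ^ ((m + s) / 2) : ℤ) : ℂ) * eChar p (fstar γ) := by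
    intro γ hγ
    rw [hwval γ hγ, hεb]
    rw [show sqrtPStar p ^ (m + s)
        = ((((-1 : ℤ) ^ ((p - 1) / 2) * p : ℤ) ^ ((m + s) / 2) : ℤ) : ℂ) from by
      conv_lhs => rw [h2h]
      exact sqrtPStar_pow hp2 ((m + s) / 2)]
    push_cast
    ring
  have hWn : ∀ γ, γ ∉ walshSupp p m s F f →
      walsh p F f γ = (((0 : ℤ)) : ℂ) * eChar p 0 := by
    intro γ hγ
    rcases hplat γ with h | h
    · rw [Complex.normSq_eq_zero.mp h]; simp
    · exact absurd h hγ
  have h0S : (0 : F) ∉ walshSupp p m s F f := by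
    intro h0
    have h1 : Complex.normSq (walsh p F f 0) = (p : ℝ) ^ (m + s) := h0
    rw [hbal, map_zero] at h1
    exact (pow_ne_zero (m + s) (Nat.cast_ne_zero.mpr hprime.ne_zero) : ((p:ℝ))^(m+s) ≠ 0) h1.symm
  have main : ∀ v ∈ extCode p m F f α, v ≠ 0 →
      ((εb = 1 → p ^ m - p ^ (m - 1) - (p - 1) * p ^ ((m + s) / 2 - 1) + 2 ≤ wtH v) ∧
       (εb = -1 → p ^ m - p ^ (m - 1) - p ^ ((m + s) / 2 - 1) + 2 ≤ wtH v)) := by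
    rintro v ⟨c, a, aa, hv⟩ hv0
    set hlf := (m + s) / 2 with hhlf
    set b : F := ∑ i : Fin m, aa i • α ^ (i : ℕ) with hbdef
    set prefixv : Fin (m + 2) → ZMod p := Fin.cons c (Fin.cons a aa) with hpre
    set X3 := p ^ (hlf - 1) with hX3def
    set A := (p - 1) * X3 with hAdef
    set X2 := p ^ (m - 1) with hX2def
    set B := (p - 1) * X2 with hBdef
    set X1 := p ^ m with hX1def
    -- arithmetic facts
    have hh2 : 2 ≤ hlf := by omega
    have hhm : hlf ≤ m := by omega
    have hX12 : X2 * p = X1 := by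
      rw [hX2def, hX1def, ← pow_succ]
      congr 1
      omega
    have hXh : X3 * p = p ^ hlf := by
      rw [hX3def, ← pow_succ]
      congr 1
      omega
    have hle32 : X3 ≤ X2 := Nat.pow_le_pow_right (by omega) (by omega)
    have h3X3 : 3 ≤ X3 := le_trans hp3 (by
      calc p = p ^ 1 := (pow_one p).symm
        _ ≤ X3 := Nat.pow_le_pow_right (by omega) (by omega))
    have hAB : A ≤ B := Nat.mul_le_mul_left _ hle32
    have h6 : B + X2 = X1 := by
      rw [hBdef, Nat.sub_one_mul, Nat.sub_add_cancel (Nat.le_mul_of_pos_left _ (by omega)),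
        mul_comm]
      exact hX12
    have h2A : 6 ≤ A := by
      calc (6 : ℕ) = 2 * 3 := rfl
        _ ≤ (p - 1) * X3 := Nat.mul_le_mul (by omega) h3X3
    clear_value X3 A X2 B X1
    have hcardm : Fintype.card F = p ^ m := by rw [← hX1def]; exact hcard
    -- weight decomposition
    set g : F → ZMod p := fun x => a * f x + Algebra.trace (ZMod p) F (b * x) + (a + c)
      with hg
    have hvv : v = Sum.elim prefixv g := by
      rw [hv]
      funext z
      cases z with
      | inl j => rfl
      | inr x => exact add_assoc _ a c
    have hwt : wtH v = wtH prefixv + wtH g := by rw [hvv, wtH_sum_elim]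
    set Z := (Finset.univ.filter fun x : F => g x = 0).card with hZdef
    have hwtg : wtH g = X1 - Z ∧ Z ≤ X1 := by
      have h1 := Finset.card_filter_add_card_filter_not
        (s := (Finset.univ : Finset F)) (p := fun x : F => g x = 0)
      rw [Finset.card_univ, hcard] at h1
      have h2 : wtH g = (Finset.univ.filter fun x : F => ¬ g x = 0).card := by
        simp [wtH]
      constructor
      · omega
      · omega
    -- prefix weight bounds
    have hpw1 : a ≠ 0 → 1 ≤ wtH prefixv := by
      intro ha
      refine one_le_wtH prefixv (Fin.succ 0) ?_
      rw [hpre, Fin.cons_succ, Fin.cons_zero]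
      exact ha
    have hpwa : ∀ i : Fin m, aa i ≠ 0 → 1 ≤ wtH prefixv := by
      intro i hi
      refine one_le_wtH prefixv (Fin.succ (Fin.succ i)) ?_
      rw [hpre, Fin.cons_succ, Fin.cons_succ]
      exact hi
    have hpw2 : a ≠ 0 → aa ≠ 0 → 2 ≤ wtH prefixv := by
      intro ha haa
      obtain ⟨i, hi⟩ := Function.ne_iff.mp haa
      refine two_le_wtH prefixv (Fin.succ 0) (Fin.succ (Fin.succ i)) ?_ ?_ ?_
      · simp [Fin.ext_iff]
      · rw [hpre, Fin.cons_succ, Fin.cons_zero]; exact ha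
      · rw [hpre, Fin.cons_succ, Fin.cons_succ]; exact hi
    -- case analysis
    by_cases ha : a = 0
    · subst ha
      by_cases hbz : b = 0
      · -- constant codeword
        have haa : aa = 0 := powers_injective hcardm α hα aa hbz
        subst haa
        have hc : c ≠ 0 := by
          intro hc0
          subst hc0
          apply hv0
          rw [hvv, hpre, cons_zero_zero]
          funext z
          cases z with
          | inl j => rfl
          | inr x => simp [hg, hbz]
        have hgw : wtH g = X1 := by
          have h2 : wtH g = (Finset.univ.filter fun x : F => ¬ g x = 0).card := by
            simp [wtH]
          rw [h2, Finset.filter_true_of_mem, Finset.card_univ, hcard]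
          intro x _
          simp [hg, hbz, hc]
        constructor <;> intro _ <;> omega
      · -- affine codeword, a = 0, b ≠ 0
        have hZv : Z * p = X2 * p := by
          have hZeq : Z = (Finset.univ.filter fun x : F =>
              Algebra.trace (ZMod p) F (b * x) + c = 0).card := by
            refine congrArg Finset.card (Finset.filter_congr ?_)
            intro x _
            simp [hg]
          rw [hZeq, card_affine b hbz c, hcard, hX12]
        have hZX2 : Z = X2 := Nat.eq_of_mul_eq_mul_right (by omega) hZv
        obtain ⟨i, hi⟩ : ∃ i, aa i ≠ 0 := by
          by_contra hno
          push_neg at hno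
          exact hbz (by rw [hbdef]; simp [hno])
        have h1 := hpwa i hi
        constructor <;> intro _ <;> omega
    · -- a ≠ 0
      set γ : F := -(a⁻¹ • b) with hγdef
      have hbrel : a • γ = -b := by
        rw [hγdef, smul_neg, smul_smul, mul_inv_cancel₀ ha, one_smul]
      by_cases hγS : γ ∈ walshSupp p m s F f
      · -- support case
        have hbz : b ≠ 0 := by
          intro hb0
          apply h0S
          rw [← show γ = 0 by rw [hγdef, hb0, smul_zero, neg_zero]]
          exact hγS
        have haa : aa ≠ 0 := by
          intro h0
          exact hbz (by rw [hbdef, h0]; simp)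
        have hpw := hpw2 ha haa
        have hcount := count_lemma f γ (εb * (p : ℤ) ^ hlf) (fstar γ) (hWs γ hγS)
          a ha b hbrel (a + c)
        have hcg : (Finset.univ.filter fun x : F =>
            a * f x + Algebra.trace (ZMod p) F (b * x) + (a + c) = 0).card = Z := by
          rw [hZdef]
        rw [hcg, hcard] at hcount
        -- hcount : (Z : ℤ) * p = X1 + (εb * p^hlf) * ite
        constructor
        · intro hsgn
          have hZle : Z ≤ X2 + A := by
            have hEXP : (((X2 + A : ℕ) : ℤ)) * p = (X1 : ℤ) + (p : ℤ) ^ hlf * ((p : ℤ) - 1) := by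
              have e1 : ((X2 : ℕ) : ℤ) * p = (X1 : ℤ) := by exact_mod_cast hX12
              have e2 : ((X3 : ℕ) : ℤ) * p = (p : ℤ) ^ hlf := by exact_mod_cast hXh
              rw [hAdef]
              push_cast [Nat.cast_sub (by omega : 1 ≤ p)]
              linear_combination e1 + ((p : ℤ) - 1) * e2
            have h1 : (Z : ℤ) * p ≤ ((X2 + A : ℕ) : ℤ) * p := by
              rw [hcount, hsgn, one_mul, hEXP]
              apply add_le_add (le_refl _)
              split_ifs
              · exact le_refl _
              · have hpos : (0 : ℤ) ≤ (p : ℤ) ^ hlf := by positivity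
                exact mul_le_mul_of_nonneg_left (by omega) hpos
            exact_mod_cast le_of_mul_le_mul_right h1 (by exact_mod_cast (by omega : 0 < p))
          omega
        · intro hsgn
          have hZle : Z ≤ X2 + X3 := by
            have hEXP : (((X2 + X3 : ℕ) : ℤ)) * p = (X1 : ℤ) + (p : ℤ) ^ hlf := by
              have e1 : ((X2 : ℕ) : ℤ) * p = (X1 : ℤ) := by exact_mod_cast hX12
              have e2 : ((X3 : ℕ) : ℤ) * p = (p : ℤ) ^ hlf := by exact_mod_cast hXh
              push_cast
              linear_combination e1 + e2
            have h1 : (Z : ℤ) * p ≤ ((X2 + X3 : ℕ) : ℤ) * p := by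
              rw [hcount, hsgn, hEXP]
              apply add_le_add (le_refl _)
              have hpos : (0 : ℤ) ≤ (p : ℤ) ^ hlf := by positivity
              split_ifs
              · have h2 : ((-1 : ℤ) * (p : ℤ) ^ hlf) * ((p : ℤ) - 1)
                    = -((p : ℤ) ^ hlf * ((p : ℤ) - 1)) := by ring
                rw [h2]
                have h3 : (0 : ℤ) ≤ (p : ℤ) ^ hlf * ((p : ℤ) - 1) :=
                  mul_nonneg hpos (by omega)
                exact le_trans (neg_nonpos_of_nonneg h3) hpos
              · exact le_of_eq (by ring)
            exact_mod_cast le_of_mul_le_mul_right h1 (by exact_mod_cast (by omega : 0 < p))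
          omega
      · -- non-support case
        have hcount := count_lemma f γ 0 0 (hWn γ hγS) a ha b hbrel (a + c)
        have hcg : (Finset.univ.filter fun x : F =>
            a * f x + Algebra.trace (ZMod p) F (b * x) + (a + c) = 0).card = Z := by
          rw [hZdef]
        rw [hcg, hcard] at hcount
        simp only [zero_mul, add_zero, Int.cast_zero] at hcount
        have hZX2 : Z = X2 := by
          have h1 : (Z : ℤ) * p = ((X2 : ℕ) : ℤ) * p := by
            rw [hcount]
            exact_mod_cast hX12.symm
          have := mul_right_cancel₀ (by exact_mod_cast (by omega : 0 < p).ne' : ((p : ℤ)) ≠ 0) h1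
          exact_mod_cast this
        have h1 := hpw1 ha
        constructor <;> intro _ <;> omega
  exact ⟨part1, part2, fun hs1 v hv hv0 => (main v hv hv0).1 hs1,
    fun hs1 v hv hv0 => (main v hv hv0).2 hs1⟩
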